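/- arXiv:1904.06227 — 2 statements merged into one kernel-verified Lean document; each statement's English description precedes it below -/
import Mathlib

section
/- For any set of inclusion atoms of the form ρⁱ_𝗑 ⊆ σⁱ_𝗑 (on subsequences of 𝗑), first-order formula α and inclusion logic formula φ, the following equivalence holds in team semantics: ∃𝗑(⋀_{i∈I} ρⁱ_𝗑 ⊆ σⁱ_𝗑 ∧ α) ∨ φ ≡ ∃𝗑∃p∃q(⋀_{i∈I} ρⁱ_𝗑 pq ⊆ σⁱ_𝗑 pq ∧ (α ↔ p=q) ∧ (α ∨ φ)), where p, q are fresh variables and the model has at least two elements. -/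
namespace TeamSem

variable {M : Type}

/-- A team is a set of assignments (variables are natural numbers). -/
abbrev Team (M : Type) := Set (ℕ → M)

/-- Lax existential extension of a team `X` along variable `x` by a choice function `F`. -/
def extT (X : Team M) (x : ℕ) (F : (ℕ → M) → Set M) : Team M :=
  {t | ∃ s ∈ X, ∃ a ∈ F s, t = Function.update s x a}

/-- Universal extension of a team `X` along variable `x`. -/
def extAll (X : Team M) (x : ℕ) : Team M :=
  {t | ∃ s ∈ X, ∃ a : M, t = Function.update s x a}

/-- First-order formulas with semantic atoms depending on a finite list of variables. -/
inductive FOForm (M : Type) where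
  | atom : List ℕ → (List M → Prop) → FOForm M
  | neg  : FOForm M → FOForm M
  | and  : FOForm M → FOForm M → FOForm M
  | or   : FOForm M → FOForm M → FOForm M
  | ex   : ℕ → FOForm M → FOForm M
  | all  : ℕ → FOForm M → FOForm M

/-- Tarskian (single-assignment) satisfaction for first-order formulas. -/
def FOForm.sat : FOForm M → (ℕ → M) → Prop
  | .atom l p, s => p (l.map s)
  | .neg φ, s => ¬ FOForm.sat φ s
  | .and φ ψ, s => FOForm.sat φ s ∧ FOForm.sat ψ s
  | .or φ ψ, s => FOForm.sat φ s ∨ FOForm.sat ψ s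
  | .ex x φ, s => ∃ a : M, FOForm.sat φ (Function.update s x a)
  | .all x φ, s => ∀ a : M, FOForm.sat φ (Function.update s x a)

/-- Free variables of a first-order formula. -/
def FOForm.fv : FOForm M → Set ℕ
  | .atom l _ => {v | v ∈ l}
  | .neg φ => FOForm.fv φ
  | .and φ ψ => FOForm.fv φ ∪ FOForm.fv ψ
  | .or φ ψ => FOForm.fv φ ∪ FOForm.fv ψ
  | .ex x φ => FOForm.fv φ \ {x}
  | .all x φ => FOForm.fv φ \ {x}

/-- Formulas of inclusion logic: first-order formulas (with negation applied
only to first-order formulas), inclusion atoms, ∧, ∨, ∃, ∀. -/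
inductive IncForm (M : Type) where
  | fo   : FOForm M → IncForm M
  | incl : List ℕ → List ℕ → IncForm M
  | and  : IncForm M → IncForm M → IncForm M
  | or   : IncForm M → IncForm M → IncForm M
  | ex   : ℕ → IncForm M → IncForm M
  | all  : ℕ → IncForm M → IncForm M

/-- Lax team semantics for inclusion logic. -/
def IncForm.tsat : IncForm M → Team M → Prop
  | .fo α, X => ∀ s ∈ X, FOForm.sat α s
  | .incl xs ys, X => ∀ s ∈ X, ∃ s' ∈ X, xs.map s = ys.map s'
  | .and φ ψ, X => IncForm.tsat φ X ∧ IncForm.tsat ψ X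
  | .or φ ψ, X => ∃ Y Z : Team M, X = Y ∪ Z ∧ IncForm.tsat φ Y ∧ IncForm.tsat ψ Z
  | .ex x φ, X => ∃ F : (ℕ → M) → Set M, (∀ s ∈ X, (F s).Nonempty) ∧
      IncForm.tsat φ (extT X x F)
  | .all x φ, X => IncForm.tsat φ (extAll X x)

/-- Free variables of an inclusion logic formula. -/
def IncForm.fv : IncForm M → Set ℕ
  | .fo α => FOForm.fv α
  | .incl xs ys => {v | v ∈ xs ∨ v ∈ ys}
  | .and φ ψ => IncForm.fv φ ∪ IncForm.fv ψ
  | .or φ ψ => IncForm.fv φ ∪ IncForm.fv ψ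
  | .ex x φ => IncForm.fv φ \ {x}
  | .all x φ => IncForm.fv φ \ {x}

/-- A block of existential quantifiers. -/
def IncForm.exs (l : List ℕ) (φ : IncForm M) : IncForm M := l.foldr IncForm.ex φ

/-- A block of universal quantifiers. -/
def IncForm.alls (l : List ℕ) (φ : IncForm M) : IncForm M := l.foldr IncForm.all φ

/-- The first-order equality atom `x = y`. -/
def eqAtom (x y : ℕ) : FOForm M :=
  .atom [x, y] (fun l => match l with | [a, b] => a = b | _ => False)

/-- The first-order inequality atom `x ≠ y`. -/
def neqAtom (x y : ℕ) : FOForm M :=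
  .atom [x, y] (fun l => match l with | [a, b] => a ≠ b | _ => False)

/-- First-order biconditional `α ↔ β`, i.e. `(¬α ∨ β) ∧ (¬β ∨ α)`. -/
def iffF (a b : FOForm M) : FOForm M := .and (.or (.neg a) b) (.or (.neg b) a)

/-- Conjunction of a list of inclusion logic formulas. -/
def bigAndI (l : List (IncForm M)) : IncForm M :=
  l.foldr IncForm.and (.fo (.atom [] (fun _ => True)))

/-- Disjunction of a list of inclusion logic formulas (empty disjunction is `⊥`). -/
def bigOrI (l : List (IncForm M)) : IncForm M :=
  l.foldr IncForm.or (.fo (.atom [] (fun _ => False)))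
section Aux
variable {M : Type}

/-- Two assignments agree on a set of variables. -/
def agreeOn (V : Set ℕ) (s t : ℕ → M) : Prop := ∀ v ∈ V, s v = t v

theorem fo_sat_congr (α : FOForm M) : ∀ {s t : ℕ → M}, (∀ v ∈ α.fv, s v = t v) →
    (α.sat s ↔ α.sat t) := by
  induction α with
  | atom l P =>
    intro s t h
    simp only [FOForm.sat]
    rw [List.map_congr_left (fun v hv => h v hv)]
  | neg φ ih => intro s t h; simp only [FOForm.sat]; rw [ih h]
  | and φ ψ ihφ ihψ =>
    intro s t h
    simp only [FOForm.sat]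
    rw [ihφ (fun v hv => h v (Or.inl hv)), ihψ (fun v hv => h v (Or.inr hv))]
  | or φ ψ ihφ ihψ =>
    intro s t h
    simp only [FOForm.sat]
    rw [ihφ (fun v hv => h v (Or.inl hv)), ihψ (fun v hv => h v (Or.inr hv))]
  | ex y φ ih =>
    intro s t h
    simp only [FOForm.sat]
    constructor <;> rintro ⟨a, ha⟩ <;> refine ⟨a, ?_⟩
    · exact (ih (fun v hv => by
        by_cases hvy : v = y
        · subst hvy; simp [Function.update]
        · simp only [Function.update, dif_neg hvy]; exact h v ⟨hv, hvy⟩)).mp ha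
    · exact (ih (fun v hv => by
        by_cases hvy : v = y
        · subst hvy; simp [Function.update]
        · simp only [Function.update, dif_neg hvy]; exact h v ⟨hv, hvy⟩)).mpr ha
  | all y φ ih =>
    intro s t h
    simp only [FOForm.sat]
    constructor <;> intro H a <;> have := H a
    · exact (ih (fun v hv => by
        by_cases hvy : v = y
        · subst hvy; simp [Function.update]
        · simp only [Function.update, dif_neg hvy]; exact h v ⟨hv, hvy⟩)).mp this
    · exact (ih (fun v hv => by
        by_cases hvy : v = y
        · subst hvy; simp [Function.update]
        · simp only [Function.update, dif_neg hvy]; exact h v ⟨hv, hvy⟩)).mpr this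

/-- Two teams are equivalent over a variable set `V`. -/
def teamEquiv (V : Set ℕ) (X Y : Team M) : Prop :=
  (∀ s ∈ X, ∃ t ∈ Y, agreeOn V s t) ∧ (∀ t ∈ Y, ∃ s ∈ X, agreeOn V s t)

theorem teamEquiv.refl (V : Set ℕ) (X : Team M) : teamEquiv V X X :=
  ⟨fun s hs => ⟨s, hs, fun _ _ => rfl⟩, fun s hs => ⟨s, hs, fun _ _ => rfl⟩⟩

theorem teamEquiv.symm {V : Set ℕ} {X Y : Team M} (h : teamEquiv V X Y) :
    teamEquiv V Y X :=
  ⟨fun t ht => (h.2 t ht).imp (fun s ⟨hs, hag⟩ => ⟨hs, fun v hv => (hag v hv).symm⟩),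
   fun s hs => (h.1 s hs).imp (fun t ⟨ht, hag⟩ => ⟨ht, fun v hv => (hag v hv).symm⟩)⟩

/-- Locality of lax team semantics for inclusion logic. -/
theorem tsat_local (φ : IncForm M) : ∀ (V : Set ℕ), φ.fv ⊆ V →
    ∀ (X Y : Team M), teamEquiv V X Y → φ.tsat X → φ.tsat Y := by
  induction φ with
  | fo α =>
    rintro V hV X Y ⟨h1, h2⟩ hX t ht
    obtain ⟨s, hs, hag⟩ := h2 t ht
    exact (fo_sat_congr α (fun v hv => hag v (hV hv))).mp (hX s hs)
  | incl xs ys =>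
    rintro V hV X Y ⟨h1, h2⟩ hX t ht
    obtain ⟨s, hs, hag⟩ := h2 t ht
    obtain ⟨s', hs', heq⟩ := hX s hs
    obtain ⟨t', ht', hag'⟩ := h1 s' hs'
    refine ⟨t', ht', ?_⟩
    calc xs.map t = xs.map s :=
          List.map_congr_left (fun v hv => (hag v (hV (Or.inl hv))).symm)
      _ = ys.map s' := heq
      _ = ys.map t' := List.map_congr_left (fun v hv => hag' v (hV (Or.inr hv)))
  | and φ ψ ihφ ihψ =>
    rintro V hV X Y hE ⟨hφ, hψ⟩
    exact ⟨ihφ V (fun v hv => hV (Or.inl hv)) X Y hE hφ,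
           ihψ V (fun v hv => hV (Or.inr hv)) X Y hE hψ⟩
  | or φ ψ ihφ ihψ =>
    rintro V hV X Y ⟨h1, h2⟩ ⟨X1, X2, hXu, hs1, hs2⟩
    refine ⟨{t ∈ Y | ∃ s ∈ X1, agreeOn V s t}, {t ∈ Y | ∃ s ∈ X2, agreeOn V s t},
      ?_, ?_, ?_⟩
    · ext t
      constructor
      · intro ht
        obtain ⟨s, hs, hag⟩ := h2 t ht
        rw [hXu] at hs
        rcases hs with hs | hs
        · exact Or.inl ⟨ht, s, hs, hag⟩
        · exact Or.inr ⟨ht, s, hs, hag⟩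
      · rintro (⟨ht, _⟩ | ⟨ht, _⟩) <;> exact ht
    · refine ihφ V (fun v hv => hV (Or.inl hv)) X1 _ ⟨?_, ?_⟩ hs1
      · intro s hs
        obtain ⟨t, ht, hag⟩ := h1 s (by rw [hXu]; exact Or.inl hs)
        exact ⟨t, ⟨ht, s, hs, hag⟩, hag⟩
      · rintro t ⟨ht, s, hs, hag⟩; exact ⟨s, hs, hag⟩
    · refine ihψ V (fun v hv => hV (Or.inr hv)) X2 _ ⟨?_, ?_⟩ hs2
      · intro s hs
        obtain ⟨t, ht, hag⟩ := h1 s (by rw [hXu]; exact Or.inr hs)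
        exact ⟨t, ⟨ht, s, hs, hag⟩, hag⟩
      · rintro t ⟨ht, s, hs, hag⟩; exact ⟨s, hs, hag⟩
  | ex y φ ih =>
    rintro V hV X Y ⟨h1, h2⟩ ⟨F, hF, hsat⟩
    refine ⟨fun t => {a | ∃ s ∈ X, agreeOn V s t ∧ a ∈ F s}, ?_, ?_⟩
    · intro t ht
      obtain ⟨s, hs, hag⟩ := h2 t ht
      obtain ⟨a, ha⟩ := hF s hs
      exact ⟨a, s, hs, hag, ha⟩
    · refine ih (V ∪ {y}) ?_ _ _ ⟨?_, ?_⟩ hsat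
      · intro v hv
        by_cases hvy : v = y
        · exact Or.inr hvy
        · exact Or.inl (hV ⟨hv, hvy⟩)
      · rintro u ⟨s, hs, a, haF, rfl⟩
        obtain ⟨t, ht, hag⟩ := h1 s hs
        refine ⟨Function.update t y a, ⟨t, ht, a, ⟨s, hs, hag, haF⟩, rfl⟩, ?_⟩
        intro v hv
        by_cases hvy : v = y
        · subst hvy; simp [Function.update]
        · simp only [Function.update, dif_neg hvy]
          rcases hv with hv | hv
          · exact hag v hv
          · exact absurd hv hvy
      · rintro u ⟨t, ht, a, ⟨s, hs, hag, haF⟩, rfl⟩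
        refine ⟨Function.update s y a, ⟨s, hs, a, haF, rfl⟩, ?_⟩
        intro v hv
        by_cases hvy : v = y
        · subst hvy; simp [Function.update]
        · simp only [Function.update, dif_neg hvy]
          rcases hv with hv | hv
          · exact hag v hv
          · exact absurd hv hvy
  | all y φ ih =>
    rintro V hV X Y ⟨h1, h2⟩ hsat
    refine ih (V ∪ {y}) ?_ _ _ ⟨?_, ?_⟩ hsat
    · intro v hv
      by_cases hvy : v = y
      · exact Or.inr hvy
      · exact Or.inl (hV ⟨hv, hvy⟩)
    · rintro u ⟨s, hs, a, rfl⟩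
      obtain ⟨t, ht, hag⟩ := h1 s hs
      refine ⟨Function.update t y a, ⟨t, ht, a, rfl⟩, ?_⟩
      intro v hv
      by_cases hvy : v = y
      · subst hvy; simp [Function.update]
      · simp only [Function.update, dif_neg hvy]
        rcases hv with hv | hv
        · exact hag v hv
        · exact absurd hv hvy
    · rintro u ⟨t, ht, a, rfl⟩
      obtain ⟨s, hs, hag⟩ := h2 t ht
      refine ⟨Function.update s y a, ⟨s, hs, a, rfl⟩, ?_⟩
      intro v hv
      by_cases hvy : v = y
      · subst hvy; simp [Function.update]
      · simp only [Function.update, dif_neg hvy]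
        rcases hv with hv | hv
        · exact hag v hv
        · exact absurd hv hvy

end Aux
section Aux2
variable {M : Type}

theorem ex_tsat_iff (y : ℕ) (φ : IncForm M) (X : Team M) :
    (IncForm.ex y φ).tsat X ↔ ∃ Y, teamEquiv ({y}ᶜ : Set ℕ) X Y ∧ φ.tsat Y := by
  constructor
  · rintro ⟨F, hF, hsat⟩
    refine ⟨extT X y F, ⟨?_, ?_⟩, hsat⟩
    · intro s hs
      obtain ⟨a, ha⟩ := hF s hs
      refine ⟨Function.update s y a, ⟨s, hs, a, ha, rfl⟩, ?_⟩
      intro v hv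
      have hvy : v ≠ y := by simpa using hv
      simp [Function.update, hvy]
    · rintro t ⟨s, hs, a, ha, rfl⟩
      refine ⟨s, hs, ?_⟩
      intro v hv
      have hvy : v ≠ y := by simpa using hv
      simp [Function.update, hvy]
  · rintro ⟨Y, ⟨h1, h2⟩, hsat⟩
    refine ⟨fun s => {a | ∃ t ∈ Y, agreeOn ({y}ᶜ : Set ℕ) s t ∧ a = t y}, ?_, ?_⟩
    · intro s hs
      obtain ⟨t, ht, hag⟩ := h1 s hs
      exact ⟨t y, t, ht, hag, rfl⟩
    · have : extT X y (fun s => {a | ∃ t ∈ Y, agreeOn ({y}ᶜ : Set ℕ) s t ∧ a = t y}) = Y := by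
        ext u
        constructor
        · rintro ⟨s, hs, a, ⟨t, ht, hag, rfl⟩, rfl⟩
          have : Function.update s y (t y) = t := by
            funext v
            by_cases hvy : v = y
            · subst hvy; simp [Function.update]
            · simp only [Function.update, dif_neg hvy]
              exact hag v hvy
          rwa [this]
        · intro hu
          obtain ⟨s, hs, hag⟩ := h2 u hu
          refine ⟨s, hs, u y, ⟨u, hu, hag, rfl⟩, ?_⟩
          funext v
          by_cases hvy : v = y
          · subst hvy; simp [Function.update]
          · simp only [Function.update, dif_neg hvy]
            exact (hag v hvy).symm
      rwa [this]

theorem exs_tsat_iff (l : List ℕ) (φ : IncForm M) : ∀ (X : Team M),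
    (IncForm.exs l φ).tsat X ↔ ∃ Y, teamEquiv ({v | v ∈ l}ᶜ : Set ℕ) X Y ∧ φ.tsat Y := by
  induction l with
  | nil =>
    intro X
    show φ.tsat X ↔ _
    constructor
    · intro h; exact ⟨X, teamEquiv.refl _ _, h⟩
    · rintro ⟨Y, hE, hY⟩
      exact tsat_local φ _ (fun v _ => by simp) Y X hE.symm hY
  | cons y l ih =>
    intro X
    show (IncForm.ex y (IncForm.exs l φ)).tsat X ↔ _
    rw [ex_tsat_iff]
    constructor
    · rintro ⟨Y1, ⟨hf1, hb1⟩, h⟩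
      rw [ih] at h
      obtain ⟨Y, ⟨hf2, hb2⟩, hY⟩ := h
      refine ⟨Y, ⟨?_, ?_⟩, hY⟩
      · intro s hs
        obtain ⟨t1, ht1, hag1⟩ := hf1 s hs
        obtain ⟨t, ht, hag2⟩ := hf2 t1 ht1
        refine ⟨t, ht, fun v hv => ?_⟩
        have hv' : ¬(v = y ∨ v ∈ l) := by simpa using hv
        push_neg at hv'
        exact (hag1 v hv'.1).trans (hag2 v (by simpa using hv'.2))
      · intro t ht
        obtain ⟨t1, ht1, hag2⟩ := hb2 t ht
        obtain ⟨s, hs, hag1⟩ := hb1 t1 ht1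
        refine ⟨s, hs, fun v hv => ?_⟩
        have hv' : ¬(v = y ∨ v ∈ l) := by simpa using hv
        push_neg at hv'
        exact (hag1 v hv'.1).trans (hag2 v (by simpa using hv'.2))
    · rintro ⟨Y, ⟨hf, hb⟩, hY⟩
      refine ⟨{u | ∃ s ∈ X, ∃ t ∈ Y, agreeOn ({v | v ∈ y :: l}ᶜ : Set ℕ) s t ∧
          u = fun v => if v = y then t v else s v}, ⟨?_, ?_⟩, ?_⟩
      · intro s hs
        obtain ⟨t, ht, hag⟩ := hf s hs
        refine ⟨_, ⟨s, hs, t, ht, hag, rfl⟩, fun v hv => ?_⟩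
        have hv' : v ≠ y := by simpa using hv
        simp [hv']
      · rintro u ⟨s, hs, t, ht, hag, rfl⟩
        refine ⟨s, hs, fun v hv => ?_⟩
        have hv' : v ≠ y := by simpa using hv
        simp [hv']
      · rw [ih]
        refine ⟨Y, ⟨?_, ?_⟩, hY⟩
        · rintro u ⟨s, hs, t, ht, hag, rfl⟩
          refine ⟨t, ht, fun v hv => ?_⟩
          have hv' : v ∉ l := by simpa using hv
          by_cases hvy : v = y
          · simp [hvy]
          · simp only [if_neg hvy]
            exact hag v (by simp [hvy, hv'])
        · intro t ht
          obtain ⟨s, hs, hag⟩ := hb t ht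
          refine ⟨_, ⟨s, hs, t, ht, hag, rfl⟩, fun v hv => ?_⟩
          have hv' : v ∉ l := by simpa using hv
          by_cases hvy : v = y
          · simp [hvy]
          · simp only [if_neg hvy]
            exact hag v (by simp [hvy, hv'])

theorem exs_append (l₁ l₂ : List ℕ) (φ : IncForm M) :
    IncForm.exs (l₁ ++ l₂) φ = IncForm.exs l₁ (IncForm.exs l₂ φ) := by
  simp [IncForm.exs, List.foldr_append]

theorem bigAndI_tsat (l : List (IncForm M)) (X : Team M) :
    (bigAndI l).tsat X ↔ ∀ ψ ∈ l, ψ.tsat X := by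
  induction l with
  | nil => simp [bigAndI, IncForm.tsat, FOForm.sat]
  | cons ψ l ih =>
    show (ψ.tsat X ∧ (bigAndI l).tsat X) ↔ _
    rw [ih]
    simp

theorem iffF_sat (a b : FOForm M) (s : ℕ → M) :
    (iffF a b).sat s ↔ (a.sat s ↔ b.sat s) := by
  simp only [iffF, FOForm.sat]
  tauto

theorem eqAtom_sat (u w : ℕ) (s : ℕ → M) : (eqAtom u w).sat s ↔ s u = s w := by
  simp [eqAtom, FOForm.sat]

end Aux2
section Main
variable {M : Type}

/-- Constant-`a` reset of the variables in `x ++ [p,q]`. -/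
def emap0 (x : List ℕ) (p q : ℕ) (a : M) (s : ℕ → M) : ℕ → M :=
  fun v => if v ∈ x ∨ v = p ∨ v = q then a else s v

open Classical in
/-- Reset of `x, p` to `a` and `q` to `a` or `b` according to `α`. -/
noncomputable def emap (α : FOForm M) (x : List ℕ) (p q : ℕ) (a b : M) (s : ℕ → M) : ℕ → M :=
  fun v => if v = q then (if α.sat (emap0 x p q a s) then a else b) else emap0 x p q a s v

/-- Reset of `p, q` to `a`. -/
def pqmap (p q : ℕ) (a : M) (t : ℕ → M) : ℕ → M :=
  fun v => if v = p ∨ v = q then a else t v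

/-- Restore `p, q` from `s`, other values from `w`. -/
def rmap (p q : ℕ) (s w : ℕ → M) : ℕ → M :=
  fun v => if v = p ∨ v = q then s v else w v

/-- the equivalence
`∃𝗑(⋀ᵢ ρⁱ_𝗑 ⊆ σⁱ_𝗑 ∧ α) ∨ φ ≡
 ∃𝗑∃p∃q(⋀ᵢ ρⁱ_𝗑 pq ⊆ σⁱ_𝗑 pq ∧ (α ↔ p=q) ∧ (α ∨ φ))`
holds in team semantics, for fresh `p, q` and a model with ≥ 2 elements. -/
theorem ex_incl_extension (x : List ℕ) (incs : List (List ℕ × List ℕ))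
    (α : FOForm M) (φ : IncForm M) (p q : ℕ) (X : Team M)
    (htwo : ∃ a b : M, a ≠ b)
    (hxnd : x.Nodup)
    (hsub : ∀ pr ∈ incs, (∀ v ∈ pr.1, v ∈ x) ∧ (∀ v ∈ pr.2, v ∈ x) ∧
      pr.1.length = pr.2.length)
    (hxφ : ∀ v ∈ x, v ∉ IncForm.fv φ)
    (hpq : p ≠ q) (hpx : p ∉ x) (hqx : q ∉ x)
    (hpα : p ∉ FOForm.fv α) (hqα : q ∉ FOForm.fv α)
    (hpφ : p ∉ IncForm.fv φ) (hqφ : q ∉ IncForm.fv φ) :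
    IncForm.tsat
      (.or (IncForm.exs x
        (.and (bigAndI (incs.map fun pr => .incl pr.1 pr.2)) (.fo α))) φ) X ↔
    IncForm.tsat
      (IncForm.exs x (.ex p (.ex q (.and
        (bigAndI (incs.map fun pr => .incl (pr.1 ++ [p, q]) (pr.2 ++ [p, q])))
        (.and (.fo (iffF α (eqAtom p q))) (.or (.fo α) φ)))))) X := by
  classical
  obtain ⟨a, b, hab⟩ := htwo
  -- the inner formula of the right-hand side
  set ψ : IncForm M := .and
      (bigAndI (incs.map fun pr => .incl (pr.1 ++ [p, q]) (pr.2 ++ [p, q])))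
      (.and (.fo (iffF α (eqAtom p q))) (.or (.fo α) φ)) with hψdef
  have hrw : IncForm.exs x (.ex p (.ex q ψ)) = IncForm.exs (x ++ [p, q]) ψ := by
    rw [exs_append]; rfl
  rw [hrw]
  -- membership facts for the complement of `x ++ [p, q]`
  have hSce : ∀ v : ℕ, v ∈ ({v | v ∈ x ++ [p, q]}ᶜ : Set ℕ) →
      v ∉ x ∧ v ≠ p ∧ v ≠ q := by
    intro v hv; simpa [not_or] using hv
  have hScm : ∀ v : ℕ, v ∉ x → v ≠ p → v ≠ q →
      v ∈ ({v | v ∈ x ++ [p, q]}ᶜ : Set ℕ) := by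
    intro v h1 h2 h3; simp [h1, h2, h3]
  -- basic facts about the maps
  have he_off : ∀ (s : ℕ → M) v, v ∉ x → v ≠ p → v ≠ q → emap α x p q a b s v = s v := by
    intro s v h1 h2 h3; simp [emap, emap0, h1, h2, h3]
  have he_x : ∀ (s : ℕ → M) v, v ∈ x → emap α x p q a b s v = a := by
    intro s v hv
    have hvq : v ≠ q := fun h => hqx (h ▸ hv)
    simp [emap, emap0, hvq, hv]
  have he_p : ∀ s : ℕ → M, emap α x p q a b s p = a := by
    intro s; simp [emap, emap0, hpq]
  have he_q : ∀ s : ℕ → M,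
      emap α x p q a b s q = if α.sat (emap0 x p q a s) then a else b := by
    intro s; simp [emap]
  have hy_off : ∀ (t : ℕ → M) v, v ≠ p → v ≠ q → pqmap p q a t v = t v := by
    intro t v h1 h2; simp [pqmap, h1, h2]
  have hy_p : ∀ t : ℕ → M, pqmap p q a t p = a := by intro t; simp [pqmap]
  have hy_q : ∀ t : ℕ → M, pqmap p q a t q = a := by intro t; simp [pqmap]
  have hαe : ∀ s : ℕ → M, α.sat (emap α x p q a b s) ↔ α.sat (emap0 x p q a s) := by
    intro s
    refine fo_sat_congr α (fun v hv => ?_)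
    have hvq : v ≠ q := fun h => hqα (h ▸ hv)
    simp [emap, hvq]
  have hαy : ∀ t : ℕ → M, α.sat (pqmap p q a t) ↔ α.sat t := by
    intro t
    refine fo_sat_congr α (fun v hv => ?_)
    have h1 : v ≠ p := fun h => hpα (h ▸ hv)
    have h2 : v ≠ q := fun h => hqα (h ▸ hv)
    simp [pqmap, h1, h2]
  have hr_x : ∀ (s w : ℕ → M) v, v ∈ x → rmap p q s w v = w v := by
    intro s w v hv
    have h1 : v ≠ p := fun h => hpx (h ▸ hv)
    have h2 : v ≠ q := fun h => hqx (h ▸ hv)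
    simp [rmap, h1, h2]
  have hαr : ∀ s w : ℕ → M, α.sat (rmap p q s w) ↔ α.sat w := by
    intro s w
    refine fo_sat_congr α (fun v hv => ?_)
    have h1 : v ≠ p := fun h => hpα (h ▸ hv)
    have h2 : v ≠ q := fun h => hqα (h ▸ hv)
    simp [rmap, h1, h2]
  constructor
  · -- forward direction
    rintro ⟨Y, Z, hXYZ, hY, hZ⟩
    rw [exs_tsat_iff] at hY
    obtain ⟨Y', ⟨hYf, hYb⟩, hθY, hαY⟩ := hY
    rw [exs_tsat_iff]
    refine ⟨(pqmap p q a '' Y') ∪ (emap α x p q a b '' Z), ⟨?_, ?_⟩, ?_, ?_, ?_⟩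
    · -- forward team equivalence
      intro s hs
      rw [hXYZ] at hs
      rcases hs with hs | hs
      · obtain ⟨t, ht, hag⟩ := hYf s hs
        refine ⟨pqmap p q a t, Or.inl ⟨t, ht, rfl⟩, fun v hv => ?_⟩
        obtain ⟨h1, h2, h3⟩ := hSce v hv
        exact (hag v h1).trans (hy_off t v h2 h3).symm
      · refine ⟨emap α x p q a b s, Or.inr ⟨s, hs, rfl⟩, fun v hv => ?_⟩
        obtain ⟨h1, h2, h3⟩ := hSce v hv
        exact (he_off s v h1 h2 h3).symm
    · -- backward team equivalence
      rintro w (⟨t, ht, rfl⟩ | ⟨s, hs, rfl⟩)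
      · obtain ⟨s, hsY, hag⟩ := hYb t ht
        refine ⟨s, by rw [hXYZ]; exact Or.inl hsY, fun v hv => ?_⟩
        obtain ⟨h1, h2, h3⟩ := hSce v hv
        exact (hag v h1).trans (hy_off t v h2 h3).symm
      · refine ⟨s, by rw [hXYZ]; exact Or.inr hs, fun v hv => ?_⟩
        obtain ⟨h1, h2, h3⟩ := hSce v hv
        exact (he_off s v h1 h2 h3).symm
    · -- the extended inclusion atoms
      rw [bigAndI_tsat]
      rintro ψi hmem
      obtain ⟨pr, hpr, rfl⟩ := List.mem_map.mp hmem
      obtain ⟨hp1, hp2, hlen⟩ := hsub pr hpr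
      rw [bigAndI_tsat] at hθY
      have hatom := hθY (.incl pr.1 pr.2) (List.mem_map.mpr ⟨pr, hpr, rfl⟩)
      rintro w (⟨t, ht, rfl⟩ | ⟨s, hs, rfl⟩)
      · obtain ⟨t', ht', heq⟩ := hatom t ht
        refine ⟨pqmap p q a t', Or.inl ⟨t', ht', rfl⟩, ?_⟩
        have h1 : pr.1.map (pqmap p q a t) = pr.1.map t :=
          List.map_congr_left fun v hv => hy_off t v
            (fun h => hpx (h ▸ hp1 v hv)) (fun h => hqx (h ▸ hp1 v hv))
        have h2 : pr.2.map (pqmap p q a t') = pr.2.map t' :=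
          List.map_congr_left fun v hv => hy_off t' v
            (fun h => hpx (h ▸ hp2 v hv)) (fun h => hqx (h ▸ hp2 v hv))
        simp only [List.map_append, List.map_cons, List.map_nil]
        rw [h1, heq, h2, hy_p, hy_q, hy_p, hy_q]
      · refine ⟨emap α x p q a b s, Or.inr ⟨s, hs, rfl⟩, ?_⟩
        simp only [List.map_append]
        congr 1
        calc pr.1.map (emap α x p q a b s)
            = pr.1.map (fun _ => a) :=
              List.map_congr_left fun v hv => he_x s v (hp1 v hv)
          _ = List.replicate pr.1.length a := by
              simp [List.map_const']
          _ = List.replicate pr.2.length a := by rw [hlen]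
          _ = pr.2.map (fun _ => a) := by simp [List.map_const']
          _ = pr.2.map (emap α x p q a b s) :=
              (List.map_congr_left fun v hv => he_x s v (hp2 v hv)).symm
    · -- the biconditional
      rintro w (⟨t, ht, rfl⟩ | ⟨s, hs, rfl⟩)
      · rw [iffF_sat, eqAtom_sat]
        exact iff_of_true ((hαy t).mpr (hαY t ht)) (by rw [hy_p, hy_q])
      · rw [iffF_sat, eqAtom_sat, hαe s, he_p, he_q]
        by_cases h : α.sat (emap0 x p q a s)
        · simp [h]
        · simp [h, hab]
    · -- the disjunction
      refine ⟨pqmap p q a '' Y', emap α x p q a b '' Z, rfl, ?_, ?_⟩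
      · rintro w ⟨t, ht, rfl⟩
        exact (hαy t).mpr (hαY t ht)
      · refine tsat_local φ (IncForm.fv φ) (le_refl _) Z _ ⟨?_, ?_⟩ hZ
        · intro s hs
          refine ⟨emap α x p q a b s, ⟨s, hs, rfl⟩, fun v hv => ?_⟩
          exact (he_off s v (fun h => hxφ v h hv) (fun h => hpφ (h ▸ hv))
            (fun h => hqφ (h ▸ hv))).symm
        · rintro w ⟨s, hs, rfl⟩
          refine ⟨s, hs, fun v hv => ?_⟩
          exact (he_off s v (fun h => hxφ v h hv) (fun h => hpφ (h ▸ hv))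
            (fun h => hqφ (h ▸ hv))).symm
  · -- backward direction
    intro h
    rw [exs_tsat_iff] at h
    obtain ⟨W, ⟨hWf, hWb⟩, hθ'W, hiffW, W1, W2, hWu, hW1, hW2⟩ := h
    have hiff : ∀ w ∈ W, (α.sat w ↔ w p = w q) := by
      intro w hw
      have := hiffW w hw
      rwa [iffF_sat, eqAtom_sat] at this
    refine ⟨{s ∈ X | ∃ w ∈ W, α.sat w ∧ agreeOn ({v | v ∈ x ++ [p, q]}ᶜ : Set ℕ) s w},
      {s ∈ X | ∃ w ∈ W2, agreeOn ({v | v ∈ x ++ [p, q]}ᶜ : Set ℕ) s w}, ?_, ?_, ?_⟩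
    · -- the split of X
      ext s
      constructor
      · intro hs
        obtain ⟨w, hw, hag⟩ := hWf s hs
        rw [hWu] at hw
        rcases hw with h1 | h2
        · exact Or.inl ⟨hs, w, by rw [hWu]; exact Or.inl h1, hW1 w h1, hag⟩
        · exact Or.inr ⟨hs, w, h2, hag⟩
      · rintro (⟨hs, _⟩ | ⟨hs, _⟩) <;> exact hs
    · -- the left disjunct
      rw [exs_tsat_iff]
      refine ⟨{u | ∃ s ∈ {s ∈ X | ∃ w ∈ W, α.sat w ∧
          agreeOn ({v | v ∈ x ++ [p, q]}ᶜ : Set ℕ) s w},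
          ∃ w ∈ W, α.sat w ∧ agreeOn ({v | v ∈ x ++ [p, q]}ᶜ : Set ℕ) s w ∧
          u = rmap p q s w}, ⟨?_, ?_⟩, ?_, ?_⟩
      · intro s hs
        obtain ⟨hsX, w, hw, hαw, hag⟩ := hs
        refine ⟨rmap p q s w, ⟨s, ⟨hsX, w, hw, hαw, hag⟩, w, hw, hαw, hag, rfl⟩,
          fun v hv => ?_⟩
        by_cases hpv : v = p ∨ v = q
        · simp [rmap, hpv]
        · push_neg at hpv
          have hvx : v ∉ x := hv
          have h := hag v (hScm v hvx hpv.1 hpv.2)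
          simpa [rmap, hpv.1, hpv.2] using h
      · rintro u ⟨s, hs, w, hw, hαw, hag, rfl⟩
        refine ⟨s, hs, fun v hv => ?_⟩
        by_cases hpv : v = p ∨ v = q
        · simp [rmap, hpv]
        · push_neg at hpv
          have hvx : v ∉ x := hv
          have h := hag v (hScm v hvx hpv.1 hpv.2)
          simpa [rmap, hpv.1, hpv.2] using h
      · -- the original inclusion atoms
        rw [bigAndI_tsat]
        rintro ψi hmem
        obtain ⟨pr, hpr, rfl⟩ := List.mem_map.mp hmem
        obtain ⟨hp1, hp2, hlen⟩ := hsub pr hpr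
        rw [bigAndI_tsat] at hθ'W
        have hatom := hθ'W (.incl (pr.1 ++ [p, q]) (pr.2 ++ [p, q]))
          (List.mem_map.mpr ⟨pr, hpr, rfl⟩)
        rintro u ⟨s, hs, w, hw, hαw, hag, rfl⟩
        obtain ⟨w', hw', heq⟩ := hatom w hw
        simp only [List.map_append, List.map_cons, List.map_nil] at heq
        obtain ⟨heq1, heq2⟩ := List.append_inj' heq (by simp [hlen])
        have hpqeq : w p = w' p ∧ w q = w' q := by
          simpa using heq2
        obtain ⟨hwp, hwq⟩ := hpqeq
        have hαw' : α.sat w' := by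
          have h1 : w p = w q := (hiff w hw).mp hαw
          exact (hiff w' hw').mpr (by rw [← hwp, ← hwq, h1])
        obtain ⟨s', hs', hag'⟩ := hWb w' hw'
        refine ⟨rmap p q s' w', ⟨s', ⟨hs', w', hw', hαw', hag'⟩, w', hw', hαw', hag', rfl⟩, ?_⟩
        calc pr.1.map (rmap p q s w)
            = pr.1.map w := List.map_congr_left fun v hv => hr_x s w v (hp1 v hv)
          _ = pr.2.map w' := heq1
          _ = pr.2.map (rmap p q s' w') :=
              (List.map_congr_left fun v hv => hr_x s' w' v (hp2 v hv)).symm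
      · -- α on the extension
        rintro u ⟨s, hs, w, hw, hαw, hag, rfl⟩
        exact (hαr s w).mpr hαw
    · -- the right disjunct
      refine tsat_local φ (IncForm.fv φ) (le_refl _) W2 _ ⟨?_, ?_⟩ hW2
      · intro w hw
        obtain ⟨s, hs, hag⟩ := hWb w (by rw [hWu]; exact Or.inr hw)
        refine ⟨s, ⟨hs, w, hw, hag⟩, fun v hv => ?_⟩
        exact (hag v (hScm v (fun h => hxφ v h hv) (fun h => hpφ (h ▸ hv))
          (fun h => hqφ (h ▸ hv)))).symm
      · rintro s ⟨hs, w, hw, hag⟩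
        refine ⟨w, hw, fun v hv => ?_⟩
        exact (hag v (hScm v (fun h => hxφ v h hv) (fun h => hpφ (h ▸ hv))
          (fun h => hqφ (h ▸ hv)))).symm

end Main
end TeamSem
end

section
/- The weak classical negation of a first-order formula is definable in inclusion logic: for any first-order formula α(𝗑) and any nonempty team X, M ⊭_X α(𝗑) if and only if M ⊨_X ∃𝗒(𝗒 ⊆ 𝗑 ∧ ¬α(𝗒/𝗑)), where 𝗒 is a sequence of fresh variables. -/
namespace TeamSem

variable {M : Type}

def ovr (y : List ℕ) (g s : ℕ → M) : ℕ → M := fun v => if v ∈ y then g v else s v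

lemma exs_intro (y : List ℕ) (g : ℕ → M) (φ : IncForm M) (X : Team M)
    (hnd : y.Nodup) (h : IncForm.tsat φ ((fun s => ovr y g s) '' X)) :
    IncForm.tsat (IncForm.exs y φ) X := by
  induction y generalizing X with
  | nil =>
    have : (fun s => ovr ([] : List ℕ) g s) '' X = X := by
      have : (fun s => ovr ([] : List ℕ) g s) = id := by
        funext s v; simp [ovr]
      simp [this]
    simpa [IncForm.exs, this] using h
  | cons a y ih =>
    refine ⟨fun _ => {g a}, fun s _ => ⟨g a, rfl⟩, ?_⟩
    have ha : a ∉ y := (List.nodup_cons.mp hnd).1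
    apply ih _ (List.nodup_cons.mp hnd).2
    have himg : (fun s => ovr y g s) '' (extT X a (fun _ => {g a}))
        = (fun s => ovr (a :: y) g s) '' X := by
      ext t
      constructor
      · rintro ⟨u, ⟨s, hs, b, hb, rfl⟩, rfl⟩
        refine ⟨s, hs, ?_⟩
        simp only [Set.mem_singleton_iff] at hb
        subst hb
        funext v
        by_cases hv : v ∈ y
        · simp [ovr, hv]
        · by_cases hva : v = a
          · subst hva; simp [ovr, hv, Function.update_self]
          · simp [ovr, hv, hva, Function.update_of_ne hva]
      · rintro ⟨s, hs, rfl⟩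
        refine ⟨Function.update s a (g a), ⟨s, hs, g a, rfl, rfl⟩, ?_⟩
        funext v
        by_cases hv : v ∈ y
        · simp [ovr, hv]
        · by_cases hva : v = a
          · subst hva; simp [ovr, hv, Function.update_self]
          · simp [ovr, hv, hva, Function.update_of_ne hva]
    rw [himg]; exact h

lemma exs_elim (y : List ℕ) (φ : IncForm M) (X : Team M)
    (h : IncForm.tsat (IncForm.exs y φ) X) :
    ∃ Y : Team M, IncForm.tsat φ Y ∧ (∀ t ∈ Y, ∃ s ∈ X, ∀ v, v ∉ y → t v = s v) ∧
      (X.Nonempty → Y.Nonempty) := by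
  induction y generalizing X with
  | nil => exact ⟨X, h, fun t ht => ⟨t, ht, fun _ _ => rfl⟩, id⟩
  | cons a y ih =>
    obtain ⟨F, hne, hsat⟩ := h
    obtain ⟨Y, hY, hproj, hnonem⟩ := ih _ hsat
    refine ⟨Y, hY, ?_, ?_⟩
    · intro t ht
      obtain ⟨u, ⟨s, hs, b, _, rfl⟩, hagree⟩ := hproj t ht
      refine ⟨s, hs, fun v hv => ?_⟩
      have hvy : v ∉ y := fun h => hv (List.mem_cons_of_mem _ h)
      have hva : v ≠ a := fun h => hv (h ▸ (List.mem_cons_self : a ∈ a :: y))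
      rw [hagree v hvy, Function.update_of_ne hva]
    · rintro ⟨s, hs⟩
      obtain ⟨b, hb⟩ := hne s hs
      exact hnonem ⟨Function.update s a b, s, hs, b, hb, rfl⟩

/-- the weak classical negation of a first-order formula is
definable in inclusion logic. The first-order formula `α(𝗑)`, whose free
variables are among `𝗑`, is rendered as an atom with variable list `𝗑` and
predicate `p`; the substitution `α(𝗒/𝗑)` is then the atom with variable
list `𝗒`. For any nonempty team `X`:
`M ⊭_X α(𝗑)  ↔  M ⊨_X ∃𝗒(𝗒 ⊆ 𝗑 ∧ ¬α(𝗒/𝗑))` for fresh `𝗒`. -/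
theorem weak_negation_definable (x y : List ℕ) (p : List M → Prop) (X : Team M)
    (hX : X.Nonempty)
    (hlen : y.length = x.length) (hynd : y.Nodup)
    (hyx : ∀ v ∈ y, v ∉ x) :
    ¬ IncForm.tsat (.fo (.atom x p)) X ↔
      IncForm.tsat (IncForm.exs y
        (.and (.incl y x) (.fo (.neg (.atom y p))))) X := by

  constructor
  · intro hneg
    simp only [IncForm.tsat, FOForm.sat, not_forall] at hneg
    obtain ⟨s₀, hs₀, hp⟩ := hneg
    set g : ℕ → M := fun v => s₀ (x.getD (y.idxOf v) 0) with hg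
    apply exs_intro y g _ _ hynd
    have key : ∀ s : ℕ → M, y.map (ovr y g s) = x.map s₀ := by
      intro s
      apply List.ext_getElem (by simp [hlen])
      intro i h1 h2
      have hiy : i < y.length := by simpa using h1
      have hix : i < x.length := by simpa using h2
      have hmem : y[i] ∈ y := List.getElem_mem _
      have : ovr y g s y[i] = g y[i] := by simp [ovr, hmem]
      simp only [List.getElem_map, this]
      simp only [hg]
      rw [hynd.idxOf_getElem i hiy, List.getD_eq_getElem _ _ hix]
    have keyx : ∀ s : ℕ → M, s ∈ X → x.map (ovr y g s) = x.map s := by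
      intro s _
      apply List.map_congr_left
      intro v hv
      have : v ∉ y := fun h => hyx v h hv
      simp [ovr, this]
    constructor
    · rintro t ⟨s, hs, rfl⟩
      refine ⟨ovr y g s₀, ⟨s₀, hs₀, rfl⟩, ?_⟩
      rw [key, keyx s₀ hs₀]
    · rintro t ⟨s, hs, rfl⟩
      simp only [FOForm.sat]
      rw [key]
      exact hp
  · intro hsat hatom
    obtain ⟨Y, ⟨hincl, hnegp⟩, hproj, hne⟩ := exs_elim y _ X hsat
    obtain ⟨t, ht⟩ := hne hX
    obtain ⟨t', ht', heq⟩ := hincl t ht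
    obtain ⟨s, hs, hagree⟩ := hproj t' ht'
    have hx : x.map t' = x.map s := by
      apply List.map_congr_left
      intro v hv
      exact hagree v (fun h => hyx v h hv)
    have : p (y.map t) := by rw [heq, hx]; exact hatom s hs
    exact hnegp t ht this


end TeamSem
end
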